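/- Let X = {0} ⊆ ℤ and Y = {0, 2} ⊆ ℤ with 2-adjacency (|m−n| = 1). The multivalued function F : X ⊸ Y with F(0) = Y has both weak and strong continuity, but F is not connectivity preserving: it maps the connected set X onto the disconnected set Y. -/

import Mathlib

/-- A subset `A` is connected under adjacency `adj`: any two of its points are
joined by a path of consecutively adjacent points lying in `A`. -/
def ConnIn {X : Type*} (adj : X → X → Prop) (A : Set X) : Prop :=
  ∀ a ∈ A, ∀ b ∈ A,
    Relation.ReflTransGen (fun u v => adj u v ∧ u ∈ A ∧ v ∈ A) a b

/-- Two subsets are adjacent if they contain points that are equal or adjacent. -/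
def AdjSets {X : Type*} (adj : X → X → Prop) (A B : Set X) : Prop :=
  ∃ a ∈ A, ∃ b ∈ B, a = b ∨ adj a b

/-- Image of a set under a multivalued function. -/
def imageMV {X Y : Type*} (F : X → Set Y) (A : Set X) : Set Y :=
  ⋃ x ∈ A, F x

/-- A multivalued function is connectivity preserving if images of connected
sets are connected. -/
def ConnPres {X Y : Type*} (adjX : X → X → Prop) (adjY : Y → Y → Prop)
    (F : X → Set Y) : Prop :=
  ∀ A : Set X, ConnIn adjX A → ConnIn adjY (imageMV F A)

theorem weak_strong_but_disconnected_image :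
    let adj : ℤ → ℤ → Prop := fun m n => |m - n| = 1
    let X : Set ℤ := {0}
    let Y : Set ℤ := {0, 2}
    let F : ℤ → Set ℤ := fun _ => Y
    (∀ x ∈ X, ∀ x' ∈ X, adj x x' → AdjSets adj (F x) (F x')) ∧
    (∀ x ∈ X, ∀ x' ∈ X, adj x x' →
      (∀ a ∈ F x, ∃ b ∈ F x', a = b ∨ adj a b) ∧
      (∀ b ∈ F x', ∃ a ∈ F x, b = a ∨ adj b a)) ∧
    ConnIn adj X ∧
    imageMV F X = Y ∧
    ¬ ConnIn adj (imageMV F X) := by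
  intro adj X Y F
  have himg : imageMV F X = Y := by
    simp [imageMV, X, F]
  refine ⟨?_, ?_, ?_, himg, ?_⟩
  · intro x hx x' hx' h
    simp only [X, Set.mem_singleton_iff] at hx hx'
    subst hx; subst hx'
    simp [adj] at h
  · intro x hx x' hx' h
    simp only [X, Set.mem_singleton_iff] at hx hx'
    subst hx; subst hx'
    simp [adj] at h
  · intro a ha b hb
    simp only [X, Set.mem_singleton_iff] at ha hb
    subst ha; subst hb
    exact Relation.ReflTransGen.refl
  · rw [himg]
    intro hconn
    have h2 := hconn 0 (by simp [Y]) 2 (by simp [Y])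
    have key : ∀ b : ℤ, Relation.ReflTransGen
        (fun u v => adj u v ∧ u ∈ Y ∧ v ∈ Y) 0 b → b = 0 := by
      intro b hb
      induction hb with
      | refl => rfl
      | tail _ h ih =>
        obtain ⟨hadj, hu, hv⟩ := h
        simp only [Y, Set.mem_insert_iff, Set.mem_singleton_iff] at hv
        rcases hv with hv | hv
        · exact hv
        · subst hv
          simp [adj, ih] at hadj
    have := key 2 h2
    omega
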